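/- If there exists R ∈ ℝ such that ε(ζ) ≤ R for μ-a.e. ζ ∈ 𝓔, then δ(T) → 0 as T → ∞ and D(T) → 0 as T → ∞. -/

import Mathlib

open MeasureTheory Real Filter

noncomputable section

variable {𝓔 : Type*} [MeasurableSpace 𝓔]

/-- The (thermodynamic) number of internal degrees of freedom
`δ(T) = (2/(k_B T)) ⬝ (∫ ε̄ e^{-ε̄/(k_B T)} dμ) / (∫ e^{-ε̄/(k_B T)} dμ)`, `ε̄ = ε - ε0`. -/
def deltaFun (μ : Measure 𝓔) (ε : 𝓔 → ℝ) (ε0 : ℝ) (kB T : ℝ) : ℝ :=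
  (2 / (kB * T)) *
    ((∫ ζ, (ε ζ - ε0) * Real.exp (-(ε ζ - ε0) / (kB * T)) ∂μ) /
      (∫ ζ, Real.exp (-(ε ζ - ε0) / (kB * T)) ∂μ))

/-- `D(T) = d(T δ(T))/dT`. -/
def Dfun (μ : Measure 𝓔) (ε : 𝓔 → ℝ) (ε0 : ℝ) (kB T : ℝ) : ℝ :=
  deriv (fun s => s * deltaFun μ ε ε0 kB s) T

def Zaux (μ : Measure 𝓔) (g : 𝓔 → ℝ) (b : ℝ) : ℝ := ∫ a, Real.exp (-b * g a) ∂μ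

def Naux (μ : Measure 𝓔) (g : 𝓔 → ℝ) (b : ℝ) : ℝ := ∫ a, g a * Real.exp (-b * g a) ∂μ

def Vaux (μ : Measure 𝓔) (g : 𝓔 → ℝ) (b : ℝ) : ℝ := ∫ a, g a * g a * Real.exp (-b * g a) ∂μ

lemma hasDerivAt_weighted_integral (μ : Measure 𝓔) (g w : 𝓔 → ℝ)
    (hg : Measurable g) (hw : Measurable w)
    (hg0 : ∀ a, 0 ≤ g a) (M K : ℝ) (hM : 0 ≤ M) (hK : 0 ≤ K)
    (hgM : ∀ a, g a ≤ M) (hwK : ∀ a, |w a| ≤ K)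
    (hint : ∀ b : ℝ, 0 < b → Integrable (fun a => Real.exp (-b * g a)) μ)
    (b₀ : ℝ) (hb₀ : 0 < b₀) :
    HasDerivAt (fun b => ∫ a, w a * Real.exp (-b * g a) ∂μ)
      (-∫ a, w a * g a * Real.exp (-b₀ * g a) ∂μ) b₀ := by
  have hexp_meas : ∀ x : ℝ, AEStronglyMeasurable (fun a => w a * Real.exp (-x * g a)) μ :=
    fun x => (hw.mul (measurable_exp.comp (hg.const_mul (-x)))).aestronglyMeasurable
  have hFint : Integrable (fun a => w a * Real.exp (-b₀ * g a)) μ := by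
    refine ((hint b₀ hb₀).const_mul K).mono' (hexp_meas b₀) (Eventually.of_forall fun a => ?_)
    rw [Real.norm_eq_abs, abs_mul, abs_of_pos (Real.exp_pos _)]
    exact mul_le_mul_of_nonneg_right (hwK a) (Real.exp_pos _).le
  have hF'meas : AEStronglyMeasurable
      (fun a => -(w a * g a * Real.exp (-b₀ * g a))) μ :=
    (((hw.mul hg).mul (measurable_exp.comp (hg.const_mul (-b₀)))).neg).aestronglyMeasurable
  have key := hasDerivAt_integral_of_dominated_loc_of_deriv_le (μ := μ)
    (F := fun x a => w a * Real.exp (-x * g a))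
    (F' := fun x a => -(w a * g a * Real.exp (-x * g a)))
    (x₀ := b₀) (bound := fun a => K * M * Real.exp (-(b₀/2) * g a))
    (s := Metric.ball b₀ (b₀/2)) (Metric.ball_mem_nhds b₀ (half_pos hb₀))
    (Eventually.of_forall fun x => hexp_meas x) hFint hF'meas
    ?_ ((hint (b₀/2) (half_pos hb₀)).const_mul (K * M)) ?_
  · have := key.2
    rw [integral_neg] at this
    exact this
  · refine Eventually.of_forall fun a => fun x hx => ?_
    have hx2 : b₀/2 ≤ x := by
      have h := abs_lt.1 (by simpa [Real.dist_eq] using Metric.mem_ball.1 hx)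
      linarith [h.1]
    have hexple : Real.exp (-x * g a) ≤ Real.exp (-(b₀/2) * g a) := by
      apply Real.exp_le_exp.2
      nlinarith [hg0 a]
    calc ‖-(w a * g a * Real.exp (-x * g a))‖
        = |w a| * (g a * Real.exp (-x * g a)) := by
          rw [norm_neg, Real.norm_eq_abs, abs_mul, abs_mul, abs_of_nonneg (hg0 a),
            abs_of_pos (Real.exp_pos _), mul_assoc]
      _ ≤ K * (M * Real.exp (-(b₀/2) * g a)) := by
          refine mul_le_mul (hwK a) ?_ (mul_nonneg (hg0 a) (Real.exp_pos _).le) hK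
          exact mul_le_mul (hgM a) hexple (Real.exp_pos _).le hM
      _ = K * M * Real.exp (-(b₀/2) * g a) := by ring
  · refine Eventually.of_forall fun a => fun x _ => ?_
    have h1 : HasDerivAt (fun b : ℝ => -b * g a) (-g a) x := by
      simpa using (hasDerivAt_neg x).mul_const (g a)
    have h3 := (h1.exp).const_mul (w a)
    refine h3.congr_deriv ?_
    ring

/-- **Corollary (bounded energies).**
If `ε ≤ R` μ-a.e. for some real `R`, then `δ(T) → 0` and `D(T) → 0` as `T → ∞`. -/
theorem delta_tendsto_zero_of_bounded_energy
    (μ : Measure 𝓔) (hμ : μ Set.univ ≠ 0)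
    (kB : ℝ) (hkB : 0 < kB)
    (ε : 𝓔 → ℝ) (hε : Measurable ε) (ε0 : ℝ)
    (hlow : ∀ᵐ ζ ∂μ, ε0 ≤ ε ζ)
    (hsup : ∀ R : ℝ, (∀ᵐ ζ ∂μ, R ≤ ε ζ) → R ≤ ε0)
    (hZ : ∀ β : ℝ, 0 < β → Integrable (fun ζ => Real.exp (-β * (ε ζ - ε0))) μ)
    (R : ℝ) (hbd : ∀ᵐ ζ ∂μ, ε ζ ≤ R) :
    Tendsto (fun T => deltaFun μ ε ε0 kB T) atTop (nhds 0) ∧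
    Tendsto (fun T => Dfun μ ε ε0 kB T) atTop (nhds 0) := by
  haveI : NeZero μ := ⟨fun h => hμ (by simp [h])⟩
  set M : ℝ := max (R - ε0) 0 with hM_def
  have hM : 0 ≤ M := le_max_right _ _
  set g : 𝓔 → ℝ := fun ζ => max (min (ε ζ - ε0) M) 0 with hg_def
  have hgmeas : Measurable g := ((hε.sub measurable_const).min measurable_const).max
    measurable_const
  have hg0 : ∀ a, 0 ≤ g a := fun a => le_max_right _ _
  have hgM : ∀ a, g a ≤ M := fun a => max_le (min_le_right _ _) hM
  have hgae : g =ᵐ[μ] fun ζ => ε ζ - ε0 := by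
    filter_upwards [hlow, hbd] with ζ h1 h2
    have hle : ε ζ - ε0 ≤ M := le_trans (by linarith) (le_max_left _ _)
    have h0 : (0:ℝ) ≤ ε ζ - ε0 := by linarith
    simp [hg_def, min_eq_left hle, max_eq_left h0]
  have hgZ : ∀ b : ℝ, 0 < b → Integrable (fun a => Real.exp (-b * g a)) μ := by
    intro b hb
    refine (hZ b hb).congr ?_
    filter_upwards [hgae] with a ha
    rw [ha]
  have hZpos : ∀ b : ℝ, 0 < b → 0 < Zaux μ g b := fun b hb => integral_exp_pos (hgZ b hb)
  have hNint : ∀ b : ℝ, 0 < b → Integrable (fun a => g a * Real.exp (-b * g a)) μ := by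
    intro b hb
    refine ((hgZ b hb).const_mul M).mono'
      ((hgmeas.mul (measurable_exp.comp (hgmeas.const_mul (-b)))).aestronglyMeasurable)
      (Eventually.of_forall fun a => ?_)
    rw [Real.norm_eq_abs, abs_mul, abs_of_nonneg (hg0 a), abs_of_pos (Real.exp_pos _)]
    exact mul_le_mul_of_nonneg_right (hgM a) (Real.exp_pos _).le
  have hNnn : ∀ b : ℝ, 0 ≤ Naux μ g b := fun b =>
    integral_nonneg fun a => mul_nonneg (hg0 a) (Real.exp_pos _).le
  have hVnn : ∀ b : ℝ, 0 ≤ Vaux μ g b := fun b =>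
    integral_nonneg fun a => mul_nonneg (mul_nonneg (hg0 a) (hg0 a)) (Real.exp_pos _).le
  have hNle : ∀ b : ℝ, 0 < b → Naux μ g b ≤ M * Zaux μ g b := by
    intro b hb
    have h := integral_mono (hNint b hb) ((hgZ b hb).const_mul M)
      (fun a => mul_le_mul_of_nonneg_right (hgM a) (Real.exp_pos _).le)
    rw [integral_const_mul] at h
    exact h
  have hVint : ∀ b : ℝ, 0 < b → Integrable (fun a => g a * g a * Real.exp (-b * g a)) μ := by
    intro b hb
    refine ((hgZ b hb).const_mul (M * M)).mono'
      (((hgmeas.mul hgmeas).mul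
        (measurable_exp.comp (hgmeas.const_mul (-b)))).aestronglyMeasurable)
      (Eventually.of_forall fun a => ?_)
    rw [Real.norm_eq_abs, abs_mul, abs_mul, abs_of_nonneg (hg0 a), abs_of_pos (Real.exp_pos _)]
    refine mul_le_mul_of_nonneg_right ?_ (Real.exp_pos _).le
    exact mul_le_mul (hgM a) (hgM a) (hg0 a) hM
  have hVle : ∀ b : ℝ, 0 < b → Vaux μ g b ≤ M * M * Zaux μ g b := by
    intro b hb
    have h := integral_mono (hVint b hb) ((hgZ b hb).const_mul (M * M))
      (fun a => mul_le_mul_of_nonneg_right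
        (mul_le_mul (hgM a) (hgM a) (hg0 a) hM) (Real.exp_pos _).le)
    rw [integral_const_mul] at h
    exact h
  have derivZ : ∀ b : ℝ, 0 < b → HasDerivAt (Zaux μ g) (-Naux μ g b) b := by
    intro b hb
    have h := hasDerivAt_weighted_integral μ g (fun _ => 1) hgmeas measurable_const hg0 M 1
      hM zero_le_one hgM (fun a => by norm_num) hgZ b hb
    simp only [one_mul] at h
    exact h
  have derivN : ∀ b : ℝ, 0 < b → HasDerivAt (Naux μ g) (-Vaux μ g b) b := by
    intro b hb
    have hwK : ∀ a, |g a| ≤ M := fun a => by rw [abs_of_nonneg (hg0 a)]; exact hgM a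
    exact hasDerivAt_weighted_integral μ g g hgmeas hgmeas hg0 M M hM hM hgM hwK hgZ b hb
  have hdelta : ∀ T : ℝ, 0 < T →
      deltaFun μ ε ε0 kB T = 2 / (kB * T) * (Naux μ g ((kB * T)⁻¹) / Zaux μ g ((kB * T)⁻¹)) := by
    intro T hT
    have h1 : (∫ ζ, (ε ζ - ε0) * Real.exp (-(ε ζ - ε0) / (kB * T)) ∂μ)
        = Naux μ g ((kB * T)⁻¹) := by
      refine integral_congr_ae ?_
      filter_upwards [hgae] with a ha
      rw [← ha]
      have hx : -(g a) / (kB * T) = -(kB * T)⁻¹ * g a := by ring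
      rw [hx]
    have h2 : (∫ ζ, Real.exp (-(ε ζ - ε0) / (kB * T)) ∂μ) = Zaux μ g ((kB * T)⁻¹) := by
      refine integral_congr_ae ?_
      filter_upwards [hgae] with a ha
      rw [← ha]
      have hx : -(g a) / (kB * T) = -(kB * T)⁻¹ * g a := by ring
      rw [hx]
    rw [deltaFun, h1, h2]
  -- the δ bound
  have hdbound : ∀ T : ℝ, 0 < T → |deltaFun μ ε ε0 kB T| ≤ 2 / (kB * T) * M := by
    intro T hT
    have hkT : 0 < kB * T := mul_pos hkB hT
    have hbpos : 0 < (kB * T)⁻¹ := inv_pos.2 hkT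
    rw [hdelta T hT, abs_mul, abs_of_nonneg (by positivity : (0:ℝ) ≤ 2 / (kB * T))]
    refine mul_le_mul_of_nonneg_left ?_ (by positivity)
    rw [abs_div, abs_of_nonneg (hNnn _), abs_of_pos (hZpos _ hbpos),
      div_le_iff₀ (hZpos _ hbpos)]
    exact hNle _ hbpos
  have hδ : Tendsto (fun T => deltaFun μ ε ε0 kB T) atTop (nhds 0) := by
    have hB : Tendsto (fun T : ℝ => (2 * M) / (kB * T)) atTop (nhds 0) :=
      tendsto_const_nhds.div_atTop (tendsto_id.const_mul_atTop hkB)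
    refine squeeze_zero_norm' ?_ hB
    filter_upwards [eventually_gt_atTop (0:ℝ)] with T hT
    rw [Real.norm_eq_abs]
    exact le_trans (hdbound T hT) (le_of_eq (by ring))
  refine ⟨hδ, ?_⟩
  -- the D bound
  have hDbound : ∀ T : ℝ, 0 < T →
      |Dfun μ ε ε0 kB T| ≤ 2 / kB * (kB / (kB * T)^2) * (M * M) := by
    intro T hT
    have hkT : 0 < kB * T := mul_pos hkB hT
    have hbpos : 0 < (kB * T)⁻¹ := inv_pos.2 hkT
    set x : ℝ := (kB * T)⁻¹ with hx_def
    set c : ℝ := -(kB / (kB * T)^2) with hc_def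
    have hbAt : HasDerivAt (fun s : ℝ => (kB * s)⁻¹) c T := by
      have h1 : HasDerivAt (fun s : ℝ => kB * s) kB T := by
        simpa using (hasDerivAt_id T).const_mul kB
      have h2 := h1.inv hkT.ne'
      rw [hc_def, show -(kB / (kB * T)^2) = -kB / (kB * T)^2 by ring]
      exact h2
    have hZb : HasDerivAt (fun s : ℝ => Zaux μ g ((kB * s)⁻¹)) (-Naux μ g x * c) T := by
      have h := (derivZ x hbpos).comp T hbAt
      simpa [Function.comp_def] using h
    have hNb : HasDerivAt (fun s : ℝ => Naux μ g ((kB * s)⁻¹)) (-Vaux μ g x * c) T := by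
      have h := (derivN x hbpos).comp T hbAt
      simpa [Function.comp_def] using h
    have hZne : Zaux μ g x ≠ 0 := (hZpos x hbpos).ne'
    have hq := hNb.div hZb hZne
    have hfull := hq.const_mul (2 / kB)
    have hEq : (fun s => s * deltaFun μ ε ε0 kB s) =ᶠ[nhds T]
        (fun s => 2 / kB * (Naux μ g ((kB * s)⁻¹) / Zaux μ g ((kB * s)⁻¹))) := by
      filter_upwards [eventually_gt_nhds hT] with s hs
      rw [hdelta s hs, ← mul_assoc]
      have hs0 : s ≠ 0 := hs.ne'
      have hkB0 : kB ≠ 0 := hkB.ne'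
      have hss : s * (2 / (kB * s)) = 2 / kB := by
        field_simp
      rw [hss]
    have hDval : Dfun μ ε ε0 kB T = 2 / kB *
        ((-Vaux μ g x * c * Zaux μ g x - Naux μ g x * (-Naux μ g x * c)) / Zaux μ g x ^ 2) := by
      have hD := (hfull.congr_of_eventuallyEq hEq).deriv
      unfold Dfun
      exact hD
    have hnum : -Vaux μ g x * c * Zaux μ g x - Naux μ g x * (-Naux μ g x * c)
        = c * (Naux μ g x * Naux μ g x - Vaux μ g x * Zaux μ g x) := by ring
    rw [hDval, hnum]
    have hZp := hZpos x hbpos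
    have habs : |2 / kB * (c * (Naux μ g x * Naux μ g x - Vaux μ g x * Zaux μ g x)
        / Zaux μ g x ^ 2)|
        = 2 / kB * |c| * (|Naux μ g x * Naux μ g x - Vaux μ g x * Zaux μ g x|
          / Zaux μ g x ^ 2) := by
      have e2 : |Zaux μ g x ^ 2| = Zaux μ g x ^ 2 := abs_of_nonneg (by positivity)
      simp only [abs_mul, abs_div, abs_two, abs_of_pos hkB, e2]
      ring
    rw [habs]
    have hdiff_le : |Naux μ g x * Naux μ g x - Vaux μ g x * Zaux μ g x|
        / Zaux μ g x ^ 2 ≤ M * M := by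
      rw [div_le_iff₀ (by positivity)]
      have h2 : Naux μ g x * Naux μ g x ≤ (M * M) * Zaux μ g x ^ 2 := by
        nlinarith [hNle x hbpos, hNnn x, hZp.le]
      have h3 : Vaux μ g x * Zaux μ g x ≤ (M * M) * Zaux μ g x ^ 2 := by
        nlinarith [hVle x hbpos, hZp.le]
      have h4 : 0 ≤ Vaux μ g x * Zaux μ g x := mul_nonneg (hVnn x) hZp.le
      have h5 : 0 ≤ Naux μ g x * Naux μ g x := mul_nonneg (hNnn x) (hNnn x)
      exact abs_le.2 ⟨by nlinarith, by nlinarith⟩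
    have hc_abs : |c| = kB / (kB * T)^2 := by
      rw [hc_def, abs_neg, abs_of_nonneg (by positivity)]
    calc 2 / kB * |c| * (|Naux μ g x * Naux μ g x - Vaux μ g x * Zaux μ g x|
          / Zaux μ g x ^ 2)
        ≤ 2 / kB * |c| * (M * M) := by
          refine mul_le_mul_of_nonneg_left hdiff_le (by positivity)
      _ = 2 / kB * (kB / (kB * T)^2) * (M * M) := by rw [hc_abs]
  have hB : Tendsto (fun T : ℝ => (2 / kB * kB * (M * M)) / (kB * T)^2) atTop (nhds 0) := by
    refine tendsto_const_nhds.div_atTop ?_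
    have h1 : Tendsto (fun T : ℝ => kB * T) atTop atTop := tendsto_id.const_mul_atTop hkB
    have h2 := h1.atTop_mul_atTop₀ h1
    refine h2.congr fun T => ?_
    ring
  refine squeeze_zero_norm' ?_ hB
  filter_upwards [eventually_gt_atTop (0:ℝ)] with T hT
  rw [Real.norm_eq_abs]
  exact le_trans (hDbound T hT) (le_of_eq (by ring))

end
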